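/- Let H be a real Hilbert space, g : H → ℝ ∪ {∞} convex proper lsc, and let 0 < α ≤ β. Then for every x ∈ H, ‖prox_{αg}(x) − prox_{βg}(x)‖ ≤ |α − β| · ‖(x − prox_{βg}(x))/β‖. -/

import Mathlib

open scoped RealInnerProductSpace

-- auxiliary: subgradient inequality from prox minimization
lemma aux_sub {H : Type*} [NormedAddCommGroup H] [InnerProductSpace ℝ H]
    (g : H → EReal)
    (hconv : ∀ x y : H, ∀ t : ℝ, 0 ≤ t → t ≤ 1 →
      g (t • x + (1 - t) • y) ≤ (t : ℝ) * g x + ((1 - t : ℝ) : EReal) * g y)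
    (α : ℝ) (hα : 0 < α) (x p q : H) (gp gq : ℝ)
    (hgp : g p = (gp : EReal)) (hgq : g q = (gq : EReal))
    (hp : ∀ u : H, g p + ((1 / (2 * α) * ‖p - x‖ ^ 2 : ℝ) : EReal)
      ≤ g u + ((1 / (2 * α) * ‖u - x‖ ^ 2 : ℝ) : EReal)) :
    gp - gq ≤ ⟪p - x, q - p⟫ / α := by
  set c : ℝ := 1 / (2 * α) with hc_def
  have hc : 0 < c := by positivity
  set I : ℝ := ⟪p - x, q - p⟫ with hI
  set D : ℝ := ‖q - p‖ ^ 2 with hD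
  have hD0 : 0 ≤ D := by positivity
  have key : ∀ t : ℝ, 0 < t → t ≤ 1 → gp - gq ≤ 2 * c * I + c * t * D := by
    intro t ht0 ht1
    have hu := hp (t • q + (1 - t) • p)
    have hc' := hconv q p t ht0.le ht1
    rw [hgq, hgp] at hc'
    rw [hgp] at hu
    have hc'' : g (t • q + (1 - t) • p) ≤ ((t * gq + (1 - t) * gp : ℝ) : EReal) := by
      rw [EReal.coe_add, EReal.coe_mul, EReal.coe_mul]; exact hc'
    have hchain : ((gp + c * ‖p - x‖ ^ 2 : ℝ) : EReal)
        ≤ ((t * gq + (1 - t) * gp + c * ‖t • q + (1 - t) • p - x‖ ^ 2 : ℝ) : EReal) := by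
      rw [EReal.coe_add, EReal.coe_add]
      exact le_trans hu (add_le_add hc'' le_rfl)
    have hreal := EReal.coe_le_coe_iff.mp hchain
    have hvec : t • q + (1 - t) • p - x = (p - x) + t • (q - p) := by module
    have hnorm : ‖t • q + (1 - t) • p - x‖ ^ 2
        = ‖p - x‖ ^ 2 + 2 * (t * I) + t ^ 2 * D := by
      rw [hvec, norm_add_sq_real, real_inner_smul_right, norm_smul,
        Real.norm_eq_abs, mul_pow, sq_abs, hI, hD]
    rw [hnorm] at hreal
    have ht' : t * (gp - gq) ≤ t * (2 * c * I + c * t * D) := by nlinarith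
    exact le_of_mul_le_mul_left ht' ht0
  have hfin : gp - gq ≤ 2 * c * I := by
    refine le_of_forall_pos_le_add ?_
    intro ε hε
    have ht0 : 0 < min 1 (ε / (c * D + 1)) := by positivity
    have ht1 : min 1 (ε / (c * D + 1)) ≤ 1 := min_le_left _ _
    have h := key _ ht0 ht1
    have hcD : 0 ≤ c * D := by positivity
    have : c * min 1 (ε / (c * D + 1)) * D ≤ ε := by
      have h2 : min 1 (ε / (c * D + 1)) ≤ ε / (c * D + 1) := min_le_right _ _
      have h3 : c * min 1 (ε / (c * D + 1)) * D ≤ c * (ε / (c * D + 1)) * D := by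
        nlinarith
      calc c * min 1 (ε / (c * D + 1)) * D ≤ c * (ε / (c * D + 1)) * D := h3
        _ = ε * (c * D / (c * D + 1)) := by ring
        _ ≤ ε * 1 := by
            apply mul_le_mul_of_nonneg_left _ hε.le
            rw [div_le_one (by linarith)]; linarith
        _ = ε := by ring
    linarith
  calc gp - gq ≤ 2 * c * I := hfin
    _ = I / α := by rw [hc_def]; field_simp

theorem stmt_8 {H : Type*} [NormedAddCommGroup H] [InnerProductSpace ℝ H]
    (g : H → EReal)
    (hconv : ∀ x y : H, ∀ t : ℝ, 0 ≤ t → t ≤ 1 →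
      g (t • x + (1 - t) • y) ≤ (t : ℝ) * g x + ((1 - t : ℝ) : EReal) * g y)
    (hproper : (∃ x, g x ≠ ⊤) ∧ ∀ x, g x ≠ ⊥)
    (hlsc : LowerSemicontinuous g)
    (α β : ℝ) (hα : 0 < α) (hαβ : α ≤ β) (x p q : H)
    (hp : ∀ u : H, g p + ((1 / (2 * α) * ‖p - x‖ ^ 2 : ℝ) : EReal)
      ≤ g u + ((1 / (2 * α) * ‖u - x‖ ^ 2 : ℝ) : EReal))
    (hq : ∀ u : H, g q + ((1 / (2 * β) * ‖q - x‖ ^ 2 : ℝ) : EReal)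
      ≤ g u + ((1 / (2 * β) * ‖u - x‖ ^ 2 : ℝ) : EReal)) :
    ‖p - q‖ ≤ |α - β| * ‖β⁻¹ • (x - q)‖ := by
  have hβ : 0 < β := lt_of_lt_of_le hα hαβ
  obtain ⟨⟨x0, hx0⟩, hbot⟩ := hproper
  -- finiteness of g p and g q
  have hfin : ∀ (γ : ℝ) (r : H), 0 < γ →
      (∀ u : H, g r + ((1 / (2 * γ) * ‖r - x‖ ^ 2 : ℝ) : EReal)
        ≤ g u + ((1 / (2 * γ) * ‖u - x‖ ^ 2 : ℝ) : EReal)) → g r ≠ ⊤ := by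
    intro γ r hγ hr htop
    have h := hr x0
    rw [htop] at h
    have h1 : (⊤ : EReal) + ((1 / (2 * γ) * ‖r - x‖ ^ 2 : ℝ) : EReal) = ⊤ :=
      EReal.top_add_of_ne_bot (EReal.coe_ne_bot _)
    rw [h1, top_le_iff] at h
    exact absurd h (EReal.add_lt_top hx0 (EReal.coe_ne_top _)).ne
  have hptop := hfin α p hα hp
  have hqtop := hfin β q hβ hq
  set gp : ℝ := (g p).toReal with hgp_def
  set gq : ℝ := (g q).toReal with hgq_def
  have hgp : g p = (gp : EReal) := (EReal.coe_toReal hptop (hbot p)).symm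
  have hgq : g q = (gq : EReal) := (EReal.coe_toReal hqtop (hbot q)).symm
  have h1 := aux_sub g hconv α hα x p q gp gq hgp hgq hp
  have h2 := aux_sub g hconv β hβ x q p gq gp hgq hgp hq
  set N : ℝ := ‖p - q‖ with hN_def
  set M : ℝ := ‖x - q‖ with hM_def
  set I : ℝ := ⟪x - q, p - q⟫ with hI_def
  have e1 : ⟪p - x, q - p⟫ = I - N ^ 2 := by
    have ha : p - x = (p - q) - (x - q) := by abel
    have hb : q - p = -(p - q) := by abel
    rw [hI_def, hN_def, ha, hb, inner_neg_right, inner_sub_left,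
      real_inner_self_eq_norm_sq, real_inner_comm (p - q) (x - q)]
    ring
  have e2 : ⟪q - x, p - q⟫ = -I := by
    have ha : q - x = -(x - q) := by abel
    rw [hI_def, ha, inner_neg_left]
  rw [e1] at h1
  rw [e2] at h2
  have h1' : (gp - gq) * α ≤ I - N ^ 2 := (le_div_iff₀ hα).mp h1
  have h2' : (gq - gp) * β ≤ -I := (le_div_iff₀ hβ).mp h2
  have hmono : β * N ^ 2 ≤ (β - α) * I := by nlinarith
  have hcs : I ≤ M * N := real_inner_le_norm _ _
  have hkey : β * N ^ 2 ≤ (β - α) * (M * N) := by nlinarith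
  have hgoal_eq : |α - β| * ‖β⁻¹ • (x - q)‖ = (β - α) * M / β := by
    rw [norm_smul, Real.norm_eq_abs, abs_of_nonpos (by linarith : α - β ≤ 0),
      abs_of_pos (inv_pos.mpr hβ)]
    field_simp
    rw [hM_def]; ring
  rw [hgoal_eq]
  rcases eq_or_lt_of_le (norm_nonneg (p - q)) with hN0 | hN0
  · rw [hN_def, ← hN0]
    apply div_nonneg _ hβ.le
    apply mul_nonneg (by linarith)
    rw [hM_def]; exact norm_nonneg _
  · rw [le_div_iff₀ hβ]
    have : (N * β) * N ≤ ((β - α) * M) * N := by nlinarith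
    exact le_of_mul_le_mul_right this hN0
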